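/- If G is a triangle-free simple graph on n vertices whose minimum degree satisfies δ(G) > 2n/5, then G is bipartite. -/

import Mathlib

open SimpleGraph

/-- A graph is bipartite if its vertex set can be partitioned into two parts so that
every edge has one endpoint in each part. -/
def IsBipartite {V : Type*} (G : SimpleGraph V) : Prop :=
  ∃ A : Set V, ∀ ⦃v w : V⦄, G.Adj v w → (v ∈ A ↔ w ∉ A)

/-- From a walk we can extract a subwalk between indices `i ≤ j`. -/
lemma walk_segment {V : Type} {G : SimpleGraph V} {a b : V} (w : G.Walk a b) :
    ∀ j i, i ≤ j → j ≤ w.length →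
      ∃ p : G.Walk (w.getVert i) (w.getVert j), p.length = j - i := by
  intro j
  induction j with
  | zero =>
    intro i hi _
    obtain rfl := Nat.le_zero.mp hi
    exact ⟨Walk.nil, rfl⟩
  | succ j ih =>
    intro i hi hj
    rcases Nat.lt_or_ge i (j + 1) with h | h
    · have hij : i ≤ j := Nat.lt_succ_iff.mp h
      obtain ⟨p, hp⟩ := ih i hij (le_trans (Nat.le_succ j) hj)
      refine ⟨p.concat (w.adj_getVert_succ (by omega)), ?_⟩
      rw [Walk.length_concat, hp]; omega
    · have hij : i = j + 1 := le_antisymm hi h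
      subst hij
      exact ⟨Walk.nil, by simp⟩

/-- A graph with no odd closed walk is bipartite. -/
lemma bipartite_of_no_odd_closed_walk {V : Type} {G : SimpleGraph V}
    (h : ∀ (u : V) (p : G.Walk u u), ¬ Odd p.length) : _root_.IsBipartite G := by
  classical
  refine ⟨{v | Odd (G.dist ((G.connectedComponentMk v).out) v)}, ?_⟩
  intro v w hvw
  have hcc : G.connectedComponentMk v = G.connectedComponentMk w :=
    ConnectedComponent.sound hvw.reachable
  simp only [Set.mem_setOf_eq, ← hcc]
  set r := (G.connectedComponentMk v).out with hr
  have hrv : G.Reachable r v :=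
    ConnectedComponent.exact ((G.connectedComponentMk v).out_eq)
  have hrw : G.Reachable r w :=
    ConnectedComponent.exact (((G.connectedComponentMk v).out_eq).trans hcc)
  obtain ⟨p, hp⟩ := hrv.exists_walk_length_eq_dist
  obtain ⟨q, hq⟩ := hrw.exists_walk_length_eq_dist
  have key := h r (p.append (Walk.cons hvw q.reverse))
  rw [Walk.length_append, Walk.length_cons, Walk.length_reverse, hp, hq] at key
  rw [Nat.odd_iff] at key ⊢
  rw [Nat.odd_iff]
  omega

/-- Gap lemma: for a minimal odd closed walk in a triangle-free graph, two neighbors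
of a common vertex among the walk vertices have index gap `2` or `m - 2`. -/
lemma gap_lemma {V : Type} {G : SimpleGraph V} (htf : G.CliqueFree 3)
    {x : V} (w : G.Walk x x) {m : ℕ} (hm : w.length = m) (hodd : Odd m)
    (hmin : ∀ (y : V) (p : G.Walk y y), Odd p.length → m ≤ p.length)
    {u : V} {i j : ℕ} (hij : i < j) (hjm : j < m)
    (hui : G.Adj u (w.getVert i)) (huj : G.Adj u (w.getVert j)) :
    j - i = 2 ∨ j - i = m - 2 := by
  classical
  have hodd' : m % 2 = 1 := Nat.odd_iff.mp hodd
  -- the walk is not too short near triangles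
  have hne1 : j - i ≠ 1 := by
    intro h1
    have hj_eq : j = i + 1 := by omega
    have hadj : G.Adj (w.getVert i) (w.getVert j) := by
      subst hj_eq; exact w.adj_getVert_succ (by omega)
    exact htf {u, w.getVert i, w.getVert j}
      (is3Clique_triple_iff.mpr ⟨hui, huj, hadj⟩)
  -- inner segment walk
  obtain ⟨p, hp⟩ := walk_segment w j i hij.le (by omega)
  -- wrap-around segment walks
  obtain ⟨p2, hp2⟩ := walk_segment w w.length j (by omega) le_rfl
  obtain ⟨p3, hp3⟩ := walk_segment w i 0 (Nat.zero_le _) (by omega)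
  rcases Nat.even_or_odd (j - i) with he | ho
  · -- inner gap even, wrap gap odd: wrap closed walk is odd, shorter unless j - i ≤ 2
    have he' : (j - i) % 2 = 0 := Nat.even_iff.mp he
    set q2 : G.Walk u u :=
      Walk.cons huj (((p2.copy rfl w.getVert_length).append
        (p3.copy w.getVert_zero rfl)).concat hui.symm) with hq2
    have hq2len : q2.length = (m - (j - i)) + 2 := by
      rw [hq2]
      simp only [Walk.length_cons, Walk.length_concat, Walk.length_append,
        Walk.length_copy, hp2, hp3, hm]
      try omega
    have hq2odd : Odd q2.length := by
      rw [hq2len, Nat.odd_iff]; omega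
    have := hmin u q2 hq2odd
    rw [hq2len] at this
    left; omega
  · -- inner gap odd: inner closed walk is odd
    have ho' : (j - i) % 2 = 1 := Nat.odd_iff.mp ho
    set q1 : G.Walk u u := Walk.cons hui (p.concat huj.symm) with hq1
    have hq1len : q1.length = (j - i) + 2 := by
      rw [hq1]
      simp only [Walk.length_cons, Walk.length_concat, hp]
      try omega
    have hq1odd : Odd q1.length := by
      rw [hq1len, Nat.odd_iff]; omega
    have := hmin u q1 hq1odd
    rw [hq1len] at this
    right; omega

/-- Every vertex has at most two neighbors (by index) on a minimal odd closed walk. -/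
lemma card_neighbors_le_two {V : Type} {G : SimpleGraph V} [DecidableRel G.Adj]
    (htf : G.CliqueFree 3)
    {x : V} (w : G.Walk x x) {m : ℕ} (hm : w.length = m) (hodd : Odd m)
    (hm5 : 5 ≤ m)
    (hmin : ∀ (y : V) (p : G.Walk y y), Odd p.length → m ≤ p.length)
    (u : V) :
    (Finset.filter (fun i => G.Adj u (w.getVert i)) (Finset.range m)).card ≤ 2 := by
  by_contra hc
  push_neg at hc
  set s := Finset.filter (fun i => G.Adj u (w.getVert i)) (Finset.range m) with hs
  have hne : s.Nonempty := Finset.card_pos.mp (by omega)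
  set i := s.min' hne with hi
  set l := s.max' hne with hl
  have his : i ∈ s := s.min'_mem hne
  have hls : l ∈ s := s.max'_mem hne
  have hjex : ((s.erase i).erase l).Nonempty := by
    rw [← Finset.card_pos]
    have h1 : s.card - 1 ≤ (s.erase i).card := Finset.pred_card_le_card_erase
    have h2 : (s.erase i).card - 1 ≤ ((s.erase i).erase l).card :=
      Finset.pred_card_le_card_erase
    omega
  obtain ⟨j, hj⟩ := hjex
  rw [Finset.mem_erase, Finset.mem_erase] at hj
  obtain ⟨hjl, hji, hjs⟩ := hj
  have hij : i ≤ j := s.min'_le j hjs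
  have hjle : j ≤ l := s.le_max' j hjs
  have hilt : i < j := lt_of_le_of_ne hij (Ne.symm hji)
  have hjlt : j < l := lt_of_le_of_ne hjle hjl
  simp only [hs, Finset.mem_filter, Finset.mem_range] at his hls hjs
  have g1 := gap_lemma htf w hm hodd hmin hilt (by omega) his.2 hjs.2
  have g2 := gap_lemma htf w hm hodd hmin hjlt hls.1 hjs.2 hls.2
  have g3 := gap_lemma htf w hm hodd hmin (lt_trans hilt hjlt) hls.1 his.2 hls.2
  have hodd' : m % 2 = 1 := Nat.odd_iff.mp hodd
  rcases g1 with g1 | g1 <;> rcases g2 with g2 | g2 <;> rcases g3 with g3 | g3 <;> omega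

theorem stmt_6 (n : ℕ) {V : Type} [Fintype V]
    (G : SimpleGraph V) [DecidableRel G.Adj] (hcard : Fintype.card V = n)
    (htf : G.CliqueFree 3) (hdeg : (2 * n : ℝ) / 5 < G.minDegree) :
    _root_.IsBipartite G := by
  classical
  by_contra hb
  -- there is an odd closed walk
  have hP : ∃ k : ℕ, Odd k ∧ ∃ (y : V) (p : G.Walk y y), p.length = k := by
    by_contra hno
    push_neg at hno
    exact hb (bipartite_of_no_odd_closed_walk
      (fun y p hodd => hno p.length hodd y p rfl))
  set m := Nat.find hP with hmdef
  obtain ⟨hodd, x, w, hm⟩ := Nat.find_spec hP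
  rw [← hmdef] at hodd hm
  have hmin : ∀ (y : V) (p : G.Walk y y), Odd p.length → m ≤ p.length :=
    fun y p h => Nat.find_min' hP ⟨h, y, p, rfl⟩
  have hodd' : m % 2 = 1 := Nat.odd_iff.mp hodd
  -- m ≥ 5
  have hm1 : m ≠ 1 := by
    intro h1
    have := w.adj_getVert_succ (by omega : (0 : ℕ) < w.length)
    rw [w.getVert_zero] at this
    have h2 : w.getVert 1 = x := by
      have := w.getVert_length
      rw [hm, h1] at this
      exact this
    rw [h2] at this
    exact G.irrefl this
  have hm3 : m ≠ 3 := by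
    intro h3
    have h01 := w.adj_getVert_succ (by omega : (0 : ℕ) < w.length)
    have h12 := w.adj_getVert_succ (by omega : (1 : ℕ) < w.length)
    have h23 := w.adj_getVert_succ (by omega : (2 : ℕ) < w.length)
    have hv3 : w.getVert 3 = x := by
      have := w.getVert_length
      rw [hm, h3] at this
      exact this
    rw [w.getVert_zero] at h01
    rw [hv3] at h23
    exact htf {x, w.getVert 1, w.getVert 2}
      (is3Clique_triple_iff.mpr ⟨h01, h23.symm, h12⟩)
  have hm5 : 5 ≤ m := by omega
  -- degree counting
  have hdeg_eq : ∀ y : V, G.degree y = ∑ u : V, if G.Adj u y then 1 else 0 := by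
    intro y
    rw [← Finset.card_filter]
    show (G.neighborFinset y).card = _
    congr 1
    ext u
    simp [mem_neighborFinset, G.adj_comm]
  have hcount : m * G.minDegree ≤ 2 * n := by
    calc m * G.minDegree
        = ∑ _i ∈ Finset.range m, G.minDegree := by
          rw [Finset.sum_const, Finset.card_range, smul_eq_mul]
      _ ≤ ∑ i ∈ Finset.range m, G.degree (w.getVert i) :=
          Finset.sum_le_sum (fun i _ => G.minDegree_le_degree _)
      _ = ∑ u : V, (Finset.filter (fun i => G.Adj u (w.getVert i))
            (Finset.range m)).card := by
          simp only [hdeg_eq, Finset.card_filter]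
          exact Finset.sum_comm
      _ ≤ ∑ _u : V, 2 :=
          Finset.sum_le_sum (fun u _ =>
            card_neighbors_le_two htf w hm hodd hm5 hmin u)
      _ = 2 * n := by
          rw [Finset.sum_const, Finset.card_univ, hcard, smul_eq_mul, mul_comm]
  have h5 : 5 * G.minDegree ≤ 2 * n :=
    le_trans (Nat.mul_le_mul_right _ hm5) hcount
  have h5' : (5 : ℝ) * G.minDegree ≤ 2 * n := by exact_mod_cast h5
  linarith
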